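/- arXiv:1907.11009 — 3 statements merged into one kernel-verified Lean document; each statement's English description precedes it below -/
import Mathlib

section
/- Defining fₙ(α) = e^{(t/2)e^{−iθ}α²} · (c·α + s·e^{iθ}∂_α)ⁿ · e^{−(t/2)e^{−iθ}α²}, where c = cosh(r), s = sinh(r), t = tanh(r), one has fₙ(α) = λ^{n/2} Heₙ(α/(c√λ)) where λ = −e^{iθ} t and Heₙ are the probabilists' Hermite polynomials satisfying He₀ = 1 and Heₙ₊₁(x) = x·Heₙ(x) − Heₙ'(x). -/
open Complex Polynomial

private lemma alg_aux (c s t e ei sq z E Hn Hn' : ℂ) (n : ℕ)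
    (hc : c ≠ 0) (hsq0 : sq ≠ 0)
    (hee : e * ei = 1) (hs : s = t * c) (hc2 : c ^ 2 - s ^ 2 = 1)
    (hsq : sq ^ 2 = -e * t) :
    c * (z * (E * (sq ^ n * Hn))) +
      s * e * (E * (-(t / 2) * ei * (2 * z)) * (sq ^ n * Hn)
        + E * (sq ^ n * (Hn' * (c * sq)⁻¹)))
    = E * (sq ^ (n + 1) * (z / (c * sq) * Hn - Hn')) := by
  have hsqi : sq * sq⁻¹ = 1 := mul_inv_cancel₀ hsq0
  have h1 : c * z + s * e * (-(t / 2) * ei * (2 * z)) = z / c := by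
    rw [eq_div_iff hc]
    linear_combination z * hc2 + z * s * hs - z * s * t * c * hee
  have h2 : s * e * (c * sq)⁻¹ = -sq := by
    rw [← div_eq_mul_inv, div_eq_iff (mul_ne_zero hc hsq0)]
    linear_combination e * hs + c * hsq
  linear_combination (E * sq ^ n * Hn) * h1 + (E * sq ^ n * Hn') * h2
    - (E * sq ^ n * Hn * z * c⁻¹) * hsqi

/-- The conjugated iterates of the squeezed ladder operator are Hermite
polynomials: with `c = cosh r`, `s = sinh r`, `t = tanh r ≠ 0`, `λ = -e^{iθ}t`
and `sq` a fixed square root of `λ`,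
`fₙ(α) = e^{(t/2)e^{-iθ}α²} (cα + s e^{iθ}∂_α)ⁿ e^{-(t/2)e^{-iθ}α²}
       = sqⁿ · Heₙ(α/(c·sq))`. -/
theorem iterates_are_hermite (r θ : ℝ) (ht : Real.tanh r ≠ 0)
    (sq : ℂ) (hsq : sq ^ 2 = -Complex.exp (Complex.I * θ) * Real.tanh r) :
    ∀ (n : ℕ) (α : ℂ),
      Complex.exp ((Real.tanh r : ℂ) / 2 * Complex.exp (-Complex.I * θ) * α ^ 2) *
        ((fun f : ℂ → ℂ => fun z =>
            (Real.cosh r : ℂ) * (z * f z) +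
              (Real.sinh r : ℂ) * Complex.exp (Complex.I * θ) * deriv f z)^[n]
          (fun z =>
            Complex.exp (-((Real.tanh r : ℂ) / 2) * Complex.exp (-Complex.I * θ) * z ^ 2))) α
      = sq ^ n * Polynomial.aeval (α / ((Real.cosh r : ℂ) * sq)) (Polynomial.hermite n) := by
  intro n α
  set c : ℂ := (Real.cosh r : ℂ) with hcdef
  set s : ℂ := (Real.sinh r : ℂ) with hsdef
  set t : ℂ := (Real.tanh r : ℂ) with htdef
  set e : ℂ := Complex.exp (Complex.I * θ) with hedef
  set ei : ℂ := Complex.exp (-Complex.I * θ) with heidef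
  have hc : c ≠ 0 := by
    simp only [hcdef, ne_eq, Complex.ofReal_eq_zero]
    exact (Real.cosh_pos r).ne'
  have ht' : t ≠ 0 := by
    simp only [htdef, ne_eq, Complex.ofReal_eq_zero]; exact ht
  have he : e ≠ 0 := Complex.exp_ne_zero _
  have hsq0 : sq ≠ 0 := by
    intro h
    rw [h] at hsq
    exact (mul_ne_zero (neg_ne_zero.mpr he) ht') (by simpa using hsq.symm)
  have hee : e * ei = 1 := by
    rw [hedef, heidef, ← Complex.exp_add]
    norm_num
  have hs : s = t * c := by
    have hsR : Real.sinh r = Real.tanh r * Real.cosh r := by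
      rw [Real.tanh_eq_sinh_div_cosh]
      field_simp
    rw [hsdef, htdef, hcdef]; exact_mod_cast hsR
  have hc2 : c ^ 2 - s ^ 2 = 1 := by
    rw [hcdef, hsdef]; exact_mod_cast Real.cosh_sq_sub_sinh_sq r
  have key : ∀ m : ℕ,
      ((fun f : ℂ → ℂ => fun z => c * (z * f z) + s * e * deriv f z)^[m]
        (fun z => Complex.exp (-(t / 2) * ei * z ^ 2)))
      = fun z => Complex.exp (-(t / 2) * ei * z ^ 2) *
          (sq ^ m * Polynomial.aeval (z / (c * sq)) (Polynomial.hermite m)) := by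
    intro m
    induction m with
    | zero =>
      funext z
      simp [Polynomial.hermite_zero]
    | succ m ih =>
      rw [Function.iterate_succ_apply', ih]
      funext z
      have hE : HasDerivAt (fun z : ℂ => Complex.exp (-(t / 2) * ei * z ^ 2))
          (Complex.exp (-(t / 2) * ei * z ^ 2) * (-(t / 2) * ei * (2 * z))) z := by
        have h1 : HasDerivAt (fun z : ℂ => -(t / 2) * ei * z ^ 2)
            (-(t / 2) * ei * (2 * z)) z := by
          simpa [mul_comm, mul_assoc, mul_left_comm] using
            (hasDerivAt_pow 2 z).const_mul (-(t / 2) * ei)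
        exact h1.cexp
      have hH : HasDerivAt (fun z : ℂ => Polynomial.aeval (z / (c * sq)) (Polynomial.hermite m))
          (Polynomial.aeval (z / (c * sq)) (Polynomial.derivative (Polynomial.hermite m))
            * (c * sq)⁻¹) z := by
        have h2 : HasDerivAt (fun z : ℂ => z / (c * sq)) ((c * sq)⁻¹) z := by
          simpa [div_eq_mul_inv] using (hasDerivAt_id z).mul_const (c * sq)⁻¹
        simpa [Function.comp_def] using ((Polynomial.hermite m).hasDerivAt_aeval (z / (c * sq))).comp z h2
      have hP : HasDerivAt (fun z : ℂ =>
            sq ^ m * Polynomial.aeval (z / (c * sq)) (Polynomial.hermite m))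
          (sq ^ m * (Polynomial.aeval (z / (c * sq)) (Polynomial.derivative (Polynomial.hermite m))
            * (c * sq)⁻¹)) z := hH.const_mul _
      have hd := (hE.mul hP).deriv
      simp only []
      erw [hd, Polynomial.hermite_succ]
      simp only [map_sub, map_mul, Polynomial.aeval_X]
      have := alg_aux c s t e ei sq z (Complex.exp (-(t / 2) * ei * z ^ 2))
        (Polynomial.aeval (z / (c * sq)) (Polynomial.hermite m))
        (Polynomial.aeval (z / (c * sq)) (Polynomial.derivative (Polynomial.hermite m)))
        m hc hsq0 hee hs hc2 hsq
      linear_combination this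
  calc Complex.exp (t / 2 * ei * α ^ 2) *
        ((fun f : ℂ → ℂ => fun z => c * (z * f z) + s * e * deriv f z)^[n]
          (fun z => Complex.exp (-(t / 2) * ei * z ^ 2))) α
      = Complex.exp (t / 2 * ei * α ^ 2) * (Complex.exp (-(t / 2) * ei * α ^ 2) *
          (sq ^ n * Polynomial.aeval (α / (c * sq)) (Polynomial.hermite n))) := by
        rw [key n]
    _ = sq ^ n * Polynomial.aeval (α / (c * sq)) (Polynomial.hermite n) := by
        rw [← mul_assoc, ← Complex.exp_add]
        have : t / 2 * ei * α ^ 2 + -(t / 2) * ei * α ^ 2 = 0 := by ring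
        rw [this, Complex.exp_zero, one_mul]
end

section
/- The maximum over x, y ∈ ℝ and t ∈ [0,1) of (1−t²)^{3/2}(x² + y²) e^{−(1+t)x²} e^{−(1−t)y²} equals (1/e)·√(27/16) = 3√3/(4e), attained at x = 0, y = 1/√(1−t), t = 1/2. -/
lemma rpow_three_halves {x : ℝ} (hx : 0 ≤ x) : x ^ ((3:ℝ)/2) = Real.sqrt x ^ 3 := by
  rw [show ((3:ℝ)/2) = (1/2) * 3 by ring, Real.rpow_mul hx,
    show ((3:ℝ)) = ((3:ℕ):ℝ) by norm_num, Real.rpow_natCast, ← Real.sqrt_eq_rpow]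

lemma ue_le {b u : ℝ} (hb : 0 < b) (hu : 0 ≤ u) :
    u * Real.exp (-(b*u)) ≤ 1 / (b * Real.exp 1) := by
  have hv := Real.add_one_le_exp (b*u - 1)
  have h2 : b*u ≤ Real.exp (b*u) / Real.exp 1 := by
    rw [← Real.exp_sub]; linarith
  have key : b * u * Real.exp 1 ≤ Real.exp (b*u) := by
    calc b*u*Real.exp 1 ≤ (Real.exp (b*u)/Real.exp 1) * Real.exp 1 :=
          mul_le_mul_of_nonneg_right h2 (Real.exp_pos 1).le
      _ = Real.exp (b*u) := div_mul_cancel₀ _ (Real.exp_ne_zero 1)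
  rw [Real.exp_neg, ← one_div, mul_one_div, div_le_div_iff₀ (Real.exp_pos _) (by positivity)]
  nlinarith [Real.exp_pos (b*u)]

/-- The maximum over `x, y ∈ ℝ`, `t ∈ [0,1)` of
`(1−t²)^{3/2}(x²+y²) e^{−(1+t)x²} e^{−(1−t)y²}` equals `3√3/(4e)`, attained at
`x = 0`, `y = 1/√(1−t)`, `t = 1/2`. -/
theorem gaussian_overlap_optimization :
    (∀ x y : ℝ, ∀ t ∈ Set.Ico (0 : ℝ) 1,
      (1 - t ^ 2) ^ ((3 : ℝ) / 2) * (x ^ 2 + y ^ 2) *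
          Real.exp (-(1 + t) * x ^ 2) * Real.exp (-(1 - t) * y ^ 2) ≤
        3 * Real.sqrt 3 / (4 * Real.exp 1)) ∧
    (1 - (1 / 2 : ℝ) ^ 2) ^ ((3 : ℝ) / 2) *
        ((0 : ℝ) ^ 2 + (1 / Real.sqrt (1 - 1 / 2)) ^ 2) *
        Real.exp (-(1 + 1 / 2) * (0 : ℝ) ^ 2) *
        Real.exp (-(1 - 1 / 2) * (1 / Real.sqrt (1 - 1 / 2)) ^ 2) =
      3 * Real.sqrt 3 / (4 * Real.exp 1) := by
  constructor
  · intro x y t ht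
    obtain ⟨ht0, ht1⟩ := ht
    have hb0 : (0:ℝ) < 1 - t := by linarith
    have habnn : (0:ℝ) ≤ (1+t) * (1-t) := by nlinarith
    have hrpow : (1 - t^2) ^ ((3:ℝ)/2) = Real.sqrt ((1+t)*(1-t)) ^ 3 := by
      rw [show 1 - t^2 = (1+t)*(1-t) by ring]; exact rpow_three_halves habnn
    set s := Real.sqrt ((1+t)*(1-t)) with hs
    have hsnn : 0 ≤ s := Real.sqrt_nonneg _
    have hs2 : s^2 = (1+t)*(1-t) := Real.sq_sqrt habnn
    have hexp : Real.exp (-(1+t)*x^2) * Real.exp (-(1-t)*y^2)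
        ≤ Real.exp (-((1-t)*(x^2+y^2))) := by
      rw [← Real.exp_add]
      apply Real.exp_le_exp.mpr
      nlinarith [sq_nonneg x]
    have h1 : (x^2+y^2) * (Real.exp (-(1+t)*x^2) * Real.exp (-(1-t)*y^2))
        ≤ 1/((1-t)*Real.exp 1) := by
      calc (x^2+y^2) * (Real.exp (-(1+t)*x^2) * Real.exp (-(1-t)*y^2))
          ≤ (x^2+y^2) * Real.exp (-((1-t)*(x^2+y^2))) :=
            mul_le_mul_of_nonneg_left hexp (by positivity)
        _ ≤ 1/((1-t)*Real.exp 1) := ue_le hb0 (by positivity)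
    have hs3 : s^3 / (1-t) ≤ 3 * Real.sqrt 3 / 4 := by
      have h27 : (1+t)^3 * (1-t) ≤ 27/16 := by
        nlinarith [sq_nonneg (2*t-1), sq_nonneg t, mul_nonneg ht0 (sq_nonneg (2*t-1))]
      have h3 : Real.sqrt 3 ^ 2 = 3 := Real.sq_sqrt (by norm_num)
      have e1 : (s^3/(1-t))^2 = (1+t)^3 * (1-t) := by
        rw [div_pow, show (s^3)^2 = (s^2)^3 by ring, hs2]
        field_simp
      have e2 : (3*Real.sqrt 3/4)^2 = 27/16 := by
        rw [div_pow, mul_pow, h3]; norm_num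
      have hsq : (s^3/(1-t))^2 ≤ (3*Real.sqrt 3/4)^2 := by rw [e1, e2]; exact h27
      have hd : 0 ≤ s^3/(1-t) := by positivity
      nlinarith [hsq, hd, Real.sqrt_nonneg 3]
    rw [hrpow]
    calc s^3 * (x^2+y^2) * Real.exp (-(1+t)*x^2) * Real.exp (-(1-t)*y^2)
        = s^3 * ((x^2+y^2) * (Real.exp (-(1+t)*x^2) * Real.exp (-(1-t)*y^2))) := by ring
      _ ≤ s^3 * (1/((1-t)*Real.exp 1)) :=
          mul_le_mul_of_nonneg_left h1 (by positivity)
      _ = (s^3/(1-t)) * (1/Real.exp 1) := by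
          field_simp
      _ ≤ (3*Real.sqrt 3/4) * (1/Real.exp 1) :=
          mul_le_mul_of_nonneg_right hs3 (by positivity)
      _ = 3*Real.sqrt 3/(4*Real.exp 1) := by ring
  · have h12 : (1 - 1/2 : ℝ) = 1/2 := by norm_num
    have hsq : Real.sqrt (1/2 : ℝ) ^ 2 = 1/2 := Real.sq_sqrt (by norm_num)
    have hne : Real.sqrt (1/2 : ℝ) ≠ 0 := by positivity
    have hy2 : ((1:ℝ) / Real.sqrt (1 - 1/2)) ^ 2 = 2 := by
      rw [h12, div_pow, hsq]; norm_num
    have h3 : Real.sqrt 3 ^ 2 = 3 := Real.sq_sqrt (by norm_num)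
    have h4 : Real.sqrt 4 = 2 := by
      rw [show (4:ℝ) = 2^2 by norm_num, Real.sqrt_sq (by norm_num : (0:ℝ) ≤ 2)]
    have hr : ((1:ℝ) - (1/2)^2) ^ ((3:ℝ)/2) = 3 * Real.sqrt 3 / 8 := by
      rw [show (1:ℝ) - (1/2)^2 = 3/4 by norm_num,
        rpow_three_halves (by norm_num : (0:ℝ) ≤ 3/4),
        Real.sqrt_div (by norm_num : (0:ℝ) ≤ 3), h4, div_pow,
        pow_succ, h3]
      norm_num
    rw [hr, hy2]
    rw [show (-(1 + 1/2) * (0:ℝ)^2) = 0 by norm_num, Real.exp_zero,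
      show (-(1 - 1/2) * (2:ℝ)) = -1 by norm_num, Real.exp_neg]
    field_simp
    ring
end

section
/- The stellar robustness of the single-photon Fock state |1⟩ equals √(1 − 3√3/(4e)): the infimum of √(1 − |⟨φ|1⟩|²) over all pure Gaussian states |φ⟩ = D(γ)S(ξ)|0⟩ equals √(1 − 3√3/(4e)) ≈ 0.72. -/
open Complex

lemma key_bound (a u c : ℝ) (ha : 0 ≤ a) (hu0 : 0 ≤ u) (hu1 : u < 1)
    (hc : 0 < c) (hrel : c ^ 2 * (1 - u ^ 2) = 1) :
    a / c ^ 3 * Real.exp (-(a * (1 - u))) ≤ 3 * Real.sqrt 3 / (4 * Real.exp 1) := by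
  set s := 1 - u with hs
  have hs0 : 0 < s := by simp only [hs]; linarith
  have h1 : a * Real.exp (-(a * s)) ≤ Real.exp (-1) / s := by
    have h := Real.add_one_le_exp (a * s - 1)
    have hxe : a * s ≤ Real.exp (a * s - 1) := by linarith
    have hep : (0:ℝ) < Real.exp (-(a * s)) := Real.exp_pos _
    have h2 := mul_le_mul_of_nonneg_right hxe hep.le
    rw [← Real.exp_add] at h2
    have heq : a * s - 1 + -(a * s) = -1 := by ring
    rw [heq] at h2
    rw [le_div_iff₀ hs0]
    calc a * Real.exp (-(a * s)) * s = a * s * Real.exp (-(a * s)) := by ring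
    _ ≤ Real.exp (-1) := h2
  have hsq3 : Real.sqrt 3 ^ 2 = 3 := Real.sq_sqrt (by norm_num)
  have hsq3n : (0:ℝ) ≤ Real.sqrt 3 := Real.sqrt_nonneg 3
  have h2 : 4 ≤ 3 * Real.sqrt 3 * (s * c ^ 3) := by
    have hpoly : 16 * (1 - u) * (1 + u) ^ 3 ≤ 27 := by
      nlinarith [sq_nonneg (u - 1/2), sq_nonneg u, mul_nonneg (sq_nonneg (u - 1/2)) hu0]
    have hc6 : (c ^ 2 * (1 - u ^ 2)) ^ 3 = 1 := by rw [hrel]; norm_num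
    have hcs : (0:ℝ) ≤ c ^ 6 * s ^ 2 := by positivity
    have hmul := mul_le_mul_of_nonneg_left hpoly hcs
    have h16 : 16 ≤ 27 * (s * c ^ 3) ^ 2 := by
      simp only [hs] at hmul ⊢
      nlinarith [hmul, hc6]
    have hX : 0 ≤ 3 * Real.sqrt 3 * (s * c ^ 3) :=
      mul_nonneg (by positivity) (by positivity)
    nlinarith [h16, hX, hsq3]
  have hc3 : (0:ℝ) < c ^ 3 := pow_pos hc 3
  have step : a / c ^ 3 * Real.exp (-(a * s)) ≤ Real.exp (-1) / (s * c ^ 3) := by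
    rw [div_mul_eq_mul_div, div_le_div_iff₀ hc3 (by positivity)]
    have h := mul_le_mul_of_nonneg_right h1 (le_of_lt (mul_pos hs0 hc3))
    calc a * Real.exp (-(a * s)) * (s * c ^ 3)
        ≤ Real.exp (-1) / s * (s * c ^ 3) := h
      _ = Real.exp (-1) * c ^ 3 := by field_simp
  refine step.trans ?_
  rw [Real.exp_neg, div_le_div_iff₀ (by positivity) (by positivity)]
  calc (Real.exp 1)⁻¹ * (4 * Real.exp 1) = 4 := by
        field_simp
    _ ≤ 3 * Real.sqrt 3 * (s * c ^ 3) := h2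

lemma expr_le (γ : ℂ) (r θ : ℝ) :
    ‖γ‖ ^ 2 / Real.cosh r ^ 3 *
      Real.exp (-‖γ‖ ^ 2 -
        Real.tanh r * (γ ^ 2 * Complex.exp (Complex.I * θ)).re) ≤
      3 * Real.sqrt 3 / (4 * Real.exp 1) := by
  set a := ‖γ‖ ^ 2 with hadef
  set t := Real.tanh r with htdef
  set c := Real.cosh r with hcdef
  have ha : 0 ≤ a := by positivity
  have hc : 0 < c := Real.cosh_pos r
  have hcsq : c ^ 2 - Real.sinh r ^ 2 = 1 := Real.cosh_sq_sub_sinh_sq r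
  have hsl : |Real.sinh r| < c := by
    rcases abs_lt_of_sq_lt_sq' (by nlinarith : Real.sinh r ^ 2 < c ^ 2) hc.le with ⟨h1, h2⟩
    exact abs_lt.mpr ⟨h1, h2⟩
  have ht : t = Real.sinh r / c := by rw [htdef, Real.tanh_eq_sinh_div_cosh, hcdef]
  set u := |t| with hudef
  have hu0 : 0 ≤ u := abs_nonneg t
  have hu1 : u < 1 := by
    rw [hudef, ht, abs_div, abs_of_pos hc, div_lt_one hc]; exact hsl
  have hrel : c ^ 2 * (1 - u ^ 2) = 1 := by
    have : u ^ 2 = t ^ 2 := sq_abs t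
    rw [this, ht]
    field_simp
    nlinarith
  -- bound on the exponent
  have habs : ‖γ ^ 2 * Complex.exp (Complex.I * θ)‖ = a := by
    rw [norm_mul, norm_pow, Complex.norm_exp]
    have : (Complex.I * (θ:ℂ)).re = 0 := by simp
    rw [this, Real.exp_zero, mul_one, hadef]
  have hre : |(γ ^ 2 * Complex.exp (Complex.I * θ)).re| ≤ a := by
    rw [← habs]; exact Complex.abs_re_le_norm _
  have hexp : -a - t * (γ ^ 2 * Complex.exp (Complex.I * θ)).re ≤ -(a * (1 - u)) := by
    have h1 : -(t * (γ ^ 2 * Complex.exp (Complex.I * θ)).re) ≤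
        |t * (γ ^ 2 * Complex.exp (Complex.I * θ)).re| := neg_le_of_neg_le (neg_abs_le _)
    have h2 : |t * (γ ^ 2 * Complex.exp (Complex.I * θ)).re| = u * |(γ ^ 2 * Complex.exp (Complex.I * θ)).re| := by
      rw [abs_mul, hudef]
    have h3 : u * |(γ ^ 2 * Complex.exp (Complex.I * θ)).re| ≤ u * a :=
      mul_le_mul_of_nonneg_left hre hu0
    nlinarith [abs_nonneg (t * (γ ^ 2 * Complex.exp (Complex.I * θ)).re)]
  calc a / c ^ 3 * Real.exp (-a - t * (γ ^ 2 * Complex.exp (Complex.I * θ)).re)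
      ≤ a / c ^ 3 * Real.exp (-(a * (1 - u))) := by
        apply mul_le_mul_of_nonneg_left (Real.exp_le_exp.mpr hexp) (by positivity)
    _ ≤ 3 * Real.sqrt 3 / (4 * Real.exp 1) := key_bound a u c ha hu0 hu1 hc hrel

lemma expr_witness :
    ‖((Real.sqrt 2 : ℝ) * Complex.I : ℂ)‖ ^ 2 / Real.cosh (Real.log (Real.sqrt 3)) ^ 3 *
      Real.exp (-‖((Real.sqrt 2 : ℝ) * Complex.I : ℂ)‖ ^ 2 -
        Real.tanh (Real.log (Real.sqrt 3)) *
          (((Real.sqrt 2 : ℝ) * Complex.I) ^ 2 * Complex.exp (Complex.I * (0:ℝ))).re) =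
      3 * Real.sqrt 3 / (4 * Real.exp 1) := by
  have h3 : Real.sqrt 3 * Real.sqrt 3 = 3 := Real.mul_self_sqrt (by norm_num)
  have h3p : (0:ℝ) < Real.sqrt 3 := Real.sqrt_pos.mpr (by norm_num)
  have h2 : Real.sqrt 2 * Real.sqrt 2 = 2 := Real.mul_self_sqrt (by norm_num)
  have h2n : (0:ℝ) ≤ Real.sqrt 2 := Real.sqrt_nonneg 2
  have habs : ‖((Real.sqrt 2 : ℝ) * Complex.I : ℂ)‖ ^ 2 = 2 := by
    rw [norm_mul, Complex.norm_I, Complex.norm_real, Real.norm_eq_abs, mul_one, _root_.abs_of_nonneg h2n, sq, h2]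
  have hexp : Real.exp (Real.log (Real.sqrt 3)) = Real.sqrt 3 := Real.exp_log h3p
  have hexpn : Real.exp (-Real.log (Real.sqrt 3)) = (Real.sqrt 3)⁻¹ := by
    rw [Real.exp_neg, hexp]
  have hcosh : Real.cosh (Real.log (Real.sqrt 3)) = 2 / Real.sqrt 3 := by
    rw [Real.cosh_eq, hexp, hexpn]
    field_simp
    nlinarith
  have hsinh : Real.sinh (Real.log (Real.sqrt 3)) = 1 / Real.sqrt 3 := by
    rw [Real.sinh_eq, hexp, hexpn]
    field_simp
    nlinarith
  have htanh : Real.tanh (Real.log (Real.sqrt 3)) = 1 / 2 := by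
    rw [Real.tanh_eq_sinh_div_cosh, hsinh, hcosh]
    field_simp
  have hre : (((Real.sqrt 2 : ℝ) * Complex.I) ^ 2 * Complex.exp (Complex.I * (0:ℝ))).re = -2 := by
    have : ((Real.sqrt 2 : ℝ) * Complex.I) ^ 2 = (-2 : ℂ) := by
      rw [mul_pow, Complex.I_sq]
      rw [← Complex.ofReal_pow, sq, h2]
      norm_num
    rw [this]
    simp
  rw [habs, hcosh, htanh, hre]
  have hc3 : (2 / Real.sqrt 3) ^ 3 = 8 / (3 * Real.sqrt 3) := by
    rw [div_pow]
    congr 1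
    · norm_num
    · rw [pow_succ, sq, h3]
  rw [hc3]
  have : (-2 : ℝ) - 1 / 2 * (-2) = -1 := by norm_num
  rw [this, Real.exp_neg]
  field_simp
  ring

/-- The stellar robustness of the single-photon Fock state `|1⟩`: the infimum
over pure Gaussian states `|φ⟩ = D(γ)S(re^{iθ})|0⟩` of the trace distance
`√(1 − |⟨φ|1⟩|²)`, with
`|⟨φ|1⟩|² = (|γ|²/cosh³r)·exp(−|γ|² − tanh r · Re(γ²e^{iθ}))`,
equals `√(1 − 3√3/(4e))`. -/
theorem stellar_robustness_single_photon :
    sInf {d : ℝ | ∃ (γ : ℂ) (r θ : ℝ),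
        d = Real.sqrt (1 -
          ‖γ‖ ^ 2 / Real.cosh r ^ 3 *
            Real.exp (-‖γ‖ ^ 2 -
              Real.tanh r * (γ ^ 2 * Complex.exp (Complex.I * θ)).re))} =
      Real.sqrt (1 - 3 * Real.sqrt 3 / (4 * Real.exp 1)) := by
  apply IsLeast.csInf_eq
  constructor
  · exact ⟨(Real.sqrt 2 : ℝ) * Complex.I, Real.log (Real.sqrt 3), 0, by rw [expr_witness]⟩
  · rintro d ⟨γ, r, θ, rfl⟩
    apply Real.sqrt_le_sqrt
    linarith [expr_le γ r θ]
end
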